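/- Fix a generic stability parameter ζ ∈ ℝ^I with ζ·δ < 0 (i.e. ζ₀ + ⋯ + ζ_{L−1} < 0 and ζ·α ≠ 0 for every root α). Then there exists a unique θ ∈ Θ such that for all half-integers h < h', one has α_{[h,h']}·ζ < 0 if and only if θ(h) < θ(h'). That is, the chambers of the affine A_{L−1} arrangement in the half-space {ζ : ζ·δ < 0} are in bijection with Θ. -/

import Mathlib

/-- The positive root `α_{[h,h']}` for `h = n + 1/2 < h' = n' + 1/2`
(integer encoding): coordinate at `i ∈ ℤ/Lℤ` is the number of integers in
`(h, h') = (n, n']` with residue `i`. -/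
noncomputable def aroot (L : ℕ) (n n' : ℤ) : ZMod L → ℤ :=
  fun i => (((Finset.Ioc n n').filter (fun k : ℤ => (k : ZMod L) = i)).card : ℤ)

/-- `θ ∈ Θ` (integer encoding of half-integers). -/
def IsTheta (L : ℕ) (θ : ℤ → ℤ) : Prop :=
  Function.Bijective θ ∧ (∀ n : ℤ, θ (n + L) = θ n + L) ∧
    (∑ n ∈ Finset.range L, θ (n : ℤ)) = ∑ n ∈ Finset.range L, (n : ℤ)

namespace S16

lemma aroot_add {L : ℕ} {a b c : ℤ} (hab : a ≤ b) (hbc : b ≤ c) (i : ZMod L) :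
    aroot L a b i + aroot L b c i = aroot L a c i := by
  unfold aroot
  rw [← Finset.Ioc_union_Ioc_eq_Ioc hab hbc, Finset.filter_union,
    Finset.card_union_of_disjoint]
  · push_cast; ring
  · refine Finset.disjoint_left.mpr ?_
    intro x hx hx'
    simp only [Finset.mem_filter, Finset.mem_Ioc] at hx hx'
    omega

lemma aroot_zero {L : ℕ} {a b : ℤ} (h : b ≤ a) (i : ZMod L) : aroot L a b i = 0 := by
  unfold aroot
  rw [Finset.Ioc_eq_empty (by omega)]
  simp

section
variable {L : ℕ} [NeZero L]

lemma aroot_one (n : ℤ) (i : ZMod L) : aroot L n (n + L) i = 1 := by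
  have hL : 0 < (L : ℤ) := by exact_mod_cast Nat.pos_of_ne_zero (NeZero.ne L)
  have hvlt : (((i - (n+1) : ZMod L)).val : ℤ) < L := by
    exact_mod_cast ZMod.val_lt _
  unfold aroot
  norm_cast
  rw [Finset.card_eq_one]
  set k : ℤ := n + 1 + ((i - (n+1) : ZMod L)).val with hk
  have hkz : (k : ZMod L) = i := by
    push_cast [hk]
    simp
  refine ⟨k, ?_⟩
  ext m
  simp only [Finset.mem_filter, Finset.mem_Ioc, Finset.mem_singleton]
  constructor
  · rintro ⟨⟨h1, h2⟩, h3⟩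
    have hdvd : (L : ℤ) ∣ m - k := by
      have : (m : ZMod L) = (k : ZMod L) := by rw [h3, hkz]
      exact Int.ModEq.dvd ((ZMod.intCast_eq_intCast_iff _ _ _).mp this).symm
    have hb : |m - k| < L := by
      rw [abs_lt]; omega
    have := Int.eq_zero_of_abs_lt_dvd hdvd hb
    omega
  · rintro rfl
    refine ⟨⟨by omega, by omega⟩, hkz⟩

noncomputable def F (L : ℕ) [NeZero L] (ζ : ZMod L → ℝ) (n : ℤ) : ℝ :=
  ∑ i : ZMod L, ζ i * (((aroot L 0 n i) : ℝ) - ((aroot L n 0 i) : ℝ))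

lemma Fsub (ζ : ZMod L → ℝ) {n n' : ℤ} (h : n ≤ n') :
    F L ζ n' - F L ζ n = ∑ i : ZMod L, ζ i * ((aroot L n n' i : ℝ)) := by
  unfold F
  rw [← Finset.sum_sub_distrib]
  apply Finset.sum_congr rfl
  intro i _
  have key : (aroot L 0 n' i - aroot L n' 0 i) - (aroot L 0 n i - aroot L n 0 i)
      = aroot L n n' i := by
    rcases le_total 0 n with h1 | h1 <;> rcases le_total n' 0 with h2 | h2
    · have hnn : n = n' := le_antisymm h (h2.trans h1)
      subst hnn
      rw [aroot_zero le_rfl i]; ring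
    · rw [aroot_zero (h1.trans h) i, aroot_zero h1 i, ← aroot_add h1 h i]; ring
    · rw [aroot_zero h1 i, aroot_zero h2 i, ← aroot_add h h2 i]; ring
    · rw [aroot_zero h1 i, aroot_zero h2 i, ← aroot_add h1 h2 i]; ring
  rw [← mul_sub]
  congr 1
  push_cast [← key]
  ring

variable (ζ : ZMod L → ℝ)

lemma F_shift (n : ℤ) : F L ζ (n + L) = F L ζ n + ∑ i : ZMod L, ζ i := by
  have hL : 0 < (L:ℤ) := by exact_mod_cast Nat.pos_of_ne_zero (NeZero.ne L)
  have := Fsub ζ (show n ≤ n + L by omega)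
  simp only [aroot_one] at this
  push_cast at this
  simp at this
  linarith

lemma F_shift_mul (r k : ℤ) :
    F L ζ (r + k * L) = F L ζ r + k * ∑ i : ZMod L, ζ i := by
  induction k using Int.induction_on with
  | zero => simp
  | succ k ih =>
      have : r + (k + 1 : ℤ) * L = (r + k * L) + L := by ring
      rw [this, F_shift, ih]; push_cast; ring
  | pred k ih =>
      have : r + (-k : ℤ) * L = (r + (-k - 1) * L) + L := by ring
      rw [this, F_shift] at ih; push_cast at ih ⊢; linarith

variable (hgen : ∀ n n' : ℤ, n < n' → (∑ i : ZMod L, ζ i * (aroot L n n' i : ℝ)) ≠ 0)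

include hgen in
lemma F_inj : Function.Injective (F L ζ) := by
  intro n n' h
  by_contra hne
  rcases lt_or_gt_of_ne hne with hlt | hlt
  · exact hgen n n' hlt (by rw [← Fsub ζ hlt.le, h]; ring)
  · exact hgen n' n hlt (by rw [← Fsub ζ hlt.le, h.symm]; ring)



end

section
variable {L : ℕ} [NeZero L] (ζ : ZMod L → ℝ)
  (hgen : ∀ n n' : ℤ, n < n' → (∑ i : ZMod L, ζ i * (aroot L n n' i : ℝ)) ≠ 0)
  (hδ : (∑ i : ZMod L, ζ i) < 0)

noncomputable def kap (n : ℤ) (r : ℕ) : ℤ :=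
  ⌈(F L ζ n - F L ζ r) / (∑ i : ZMod L, ζ i)⌉

noncomputable def kapp (n : ℤ) (r : ℕ) : ℤ :=
  ⌊(F L ζ n - F L ζ r) / (∑ i : ZMod L, ζ i)⌋ + 1

noncomputable def th0 (n : ℤ) : ℤ := ∑ r ∈ Finset.range L, kap ζ n r

include hδ in
lemma kap_le {n : ℤ} {r : ℕ} {k : ℤ} :
    kap ζ n r ≤ k ↔ F L ζ ((r : ℤ) + k * L) ≤ F L ζ n := by
  rw [kap, Int.ceil_le, div_le_iff_of_neg hδ, F_shift_mul]
  constructor <;> intro h <;> linarith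

include hδ in
lemma lt_kap {n : ℤ} {r : ℕ} {k : ℤ} :
    k < kap ζ n r ↔ F L ζ n < F L ζ ((r : ℤ) + k * L) := by
  rw [← not_le, ← not_le, not_iff_not, kap_le ζ hδ]

include hδ in
lemma kapp_le {n : ℤ} {r : ℕ} {k : ℤ} :
    kapp ζ n r ≤ k ↔ F L ζ ((r : ℤ) + k * L) < F L ζ n := by
  rw [kapp, Int.add_one_le_iff, Int.floor_lt, div_lt_iff_of_neg hδ, F_shift_mul]
  constructor <;> intro h <;> linarith

include hδ in
lemma kap_self {n : ℤ} {r : ℕ} : F L ζ ((r : ℤ) + kap ζ n r * L) ≤ F L ζ n :=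
  (kap_le ζ hδ).mp le_rfl

include hδ in
lemma kapp_self {n : ℤ} {r : ℕ} : F L ζ ((r : ℤ) + kapp ζ n r * L) < F L ζ n :=
  (kapp_le ζ hδ).mp le_rfl

include hδ in
lemma th0_shift (n : ℤ) : th0 ζ (n + L) = th0 ζ n + L := by
  have hk : ∀ r : ℕ, kap ζ (n + L) r = kap ζ n r + 1 := by
    intro r
    rw [kap, kap, ← Int.ceil_add_one]
    rw [F_shift]
    congr 1
    rw [div_add_one hδ.ne]
    ring_nf
  unfold th0
  simp only [hk]
  rw [Finset.sum_add_distrib]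
  simp

include hδ in
lemma th0_shift_mul (n k : ℤ) : th0 ζ (n + k * L) = th0 ζ n + k * L := by
  induction k using Int.induction_on with
  | zero => simp
  | succ k ih =>
      have h1 : n + (k + 1 : ℤ) * L = (n + k * L) + L := by ring
      rw [h1, th0_shift ζ hδ, ih]; ring
  | pred k ih =>
      have h1 : n + (-k : ℤ) * L = (n + (-k - 1) * L) + L := by ring
      rw [h1, th0_shift ζ hδ] at ih; linarith

include hδ in
lemma th0_lt {n n' : ℤ} (h : F L ζ n' < F L ζ n) : th0 ζ n < th0 ζ n' := by
  have hL : 0 < (L : ℤ) := by exact_mod_cast Nat.pos_of_ne_zero (NeZero.ne L)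
  set r0 : ℕ := (n % L).toNat with hr0
  have hr0z : (r0 : ℤ) = n % L := Int.toNat_of_nonneg (Int.emod_nonneg n (by omega))
  have hrlt : (r0 : ℤ) < L := by
    rw [hr0z]; exact Int.emod_lt_of_pos n hL
  have hn : (r0 : ℤ) + (n / L) * L = n := by
    rw [hr0z]
    have := Int.emod_add_mul_ediv n L
    linarith
  apply Finset.sum_lt_sum
  · intro r _
    rw [kap_le ζ hδ]
    exact le_of_lt (lt_of_le_of_lt (kap_self ζ hδ) h)
  · refine ⟨r0, Finset.mem_range.mpr (by omega), ?_⟩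
    have h1 : kap ζ n r0 ≤ n / L := by
      rw [kap_le ζ hδ, hn]
    have h2 : n / L < kap ζ n' r0 := by
      rw [lt_kap ζ hδ, hn]
      exact h
    omega

include hδ hgen in
lemma th0_iff {n n' : ℤ} (h : n ≠ n') :
    th0 ζ n < th0 ζ n' ↔ F L ζ n' < F L ζ n := by
  have hF : F L ζ n ≠ F L ζ n' := fun e => h (F_inj ζ hgen e)
  constructor
  · intro hlt
    rcases lt_or_gt_of_ne hF with h1 | h1
    · exact absurd (th0_lt ζ hδ h1) (by omega)
    · exact h1
  · exact th0_lt ζ hδ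

lemma rep_unique {r r' : ℕ} (hr : r ∈ Finset.range L) (hr' : r' ∈ Finset.range L)
    {k k' : ℤ} (h : (r : ℤ) + k * L = (r' : ℤ) + k' * L) : r = r' := by
  have hL : 0 < (L : ℤ) := by exact_mod_cast Nat.pos_of_ne_zero (NeZero.ne L)
  simp only [Finset.mem_range] at hr hr'
  have hdvd : (L : ℤ) ∣ (r : ℤ) - (r' : ℤ) := ⟨k' - k, by linarith [h]⟩
  have hb : |(r : ℤ) - (r' : ℤ)| < L := by
    rw [abs_lt]
    constructor <;> [skip; skip] <;>
      · have h1 : (r : ℤ) < L := by exact_mod_cast hr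
        have h2 : (r' : ℤ) < L := by exact_mod_cast hr'
        omega
  have := Int.eq_zero_of_abs_lt_dvd hdvd hb
  omega

include hδ in
lemma kap_at_rep {n : ℤ} {r : ℕ} {k : ℤ} (h : (r : ℤ) + k * L = n) :
    kap ζ n r = k := by
  have h1 : kap ζ n r ≤ k := by rw [kap_le ζ hδ, h]
  have h2 : k - 1 < kap ζ n r := by
    rw [lt_kap ζ hδ]
    have e : F L ζ ((r : ℤ) + (k - 1) * L) = F L ζ n - (∑ i : ZMod L, ζ i) := by
      rw [F_shift_mul, ← h, F_shift_mul]
      push_cast; ring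
    rw [e]
    linarith
  omega

include hδ hgen in
lemma kapp_eq (n : ℤ) (r : ℕ) :
    kapp ζ n r = kap ζ n r + (if (r : ℤ) + kap ζ n r * L = n then 1 else 0) := by
  by_cases h : (r : ℤ) + kap ζ n r * L = n
  · rw [if_pos h]
    have h1 : ¬ kapp ζ n r ≤ kap ζ n r := by
      rw [kapp_le ζ hδ, h]
      exact lt_irrefl _
    have h2 : kapp ζ n r ≤ kap ζ n r + 1 := by
      rw [kapp_le ζ hδ]
      have e : F L ζ ((r : ℤ) + (kap ζ n r + 1) * L)
          = F L ζ ((r : ℤ) + kap ζ n r * L) + (∑ i : ZMod L, ζ i) := by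
        rw [F_shift_mul, F_shift_mul]; push_cast; ring
      rw [e]
      have := kap_self ζ hδ (n := n) (r := r)
      linarith
    omega
  · rw [if_neg h]
    have h1 : kapp ζ n r ≤ kap ζ n r := by
      rw [kapp_le ζ hδ]
      rcases lt_or_eq_of_le (kap_self ζ hδ (n := n) (r := r)) with h2 | h2
      · exact h2
      · exact absurd (F_inj ζ hgen h2) h
    have h2 : kap ζ n r ≤ kapp ζ n r := by
      rw [kap_le ζ hδ]
      exact (kapp_self ζ hδ).le
    omega

include hδ hgen in
lemma kapp_sum (n : ℤ) :
    ∑ r ∈ Finset.range L, kapp ζ n r = th0 ζ n + 1 := by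
  have hL : 0 < (L : ℤ) := by exact_mod_cast Nat.pos_of_ne_zero (NeZero.ne L)
  set r0 : ℕ := (n % L).toNat with hr0
  have hr0z : (r0 : ℤ) = n % L := Int.toNat_of_nonneg (Int.emod_nonneg n (by omega))
  have hrlt : (r0 : ℤ) < L := by rw [hr0z]; exact Int.emod_lt_of_pos n hL
  have hr0mem : r0 ∈ Finset.range L := Finset.mem_range.mpr (by exact_mod_cast hrlt)
  have hrep : (r0 : ℤ) + (n / L) * L = n := by
    rw [hr0z]
    have := Int.emod_add_mul_ediv n L
    linarith
  have key : ∀ r ∈ Finset.range L,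
      kapp ζ n r = kap ζ n r + (if r = r0 then 1 else 0) := by
    intro r hr
    rw [kapp_eq ζ hgen hδ n r]
    congr 1
    by_cases h : (r : ℤ) + kap ζ n r * L = n
    · rw [if_pos h, if_pos (rep_unique hr hr0mem (h.trans hrep.symm))]
    · rw [if_neg h, if_neg ?_]
      intro he
      subst he
      exact h (by rw [kap_at_rep ζ hδ hrep]; exact hrep)
  rw [Finset.sum_congr rfl key, Finset.sum_add_distrib, Finset.sum_ite_eq' (Finset.range L) r0 (fun _ => (1 : ℤ)), if_pos hr0mem]
  rfl

include hδ hgen in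
lemma th0_succ (n : ℤ) : ∃ m : ℤ, th0 ζ m = th0 ζ n + 1 := by
  have hL : 0 < L := Nat.pos_of_ne_zero (NeZero.ne L)
  set S : Finset ℤ := (Finset.range L).image (fun r : ℕ => (r : ℤ) + kapp ζ n r * L) with hS
  have hSne : S.Nonempty := (Finset.nonempty_range_iff.mpr (NeZero.ne L)).image _
  obtain ⟨m, hmS, hmax⟩ := S.exists_max_image (F L ζ) hSne
  have hFmn : F L ζ m < F L ζ n := by
    rw [hS] at hmS
    simp only [Finset.mem_image] at hmS
    obtain ⟨r', _, rfl⟩ := hmS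
    exact kapp_self ζ hδ
  refine ⟨m, ?_⟩
  rw [← kapp_sum ζ hgen hδ n]
  unfold th0
  apply Finset.sum_congr rfl
  intro r hr
  have h1 : kap ζ m r ≤ kapp ζ n r := by
    rw [kap_le ζ hδ]
    exact hmax _ (Finset.mem_image_of_mem _ hr)
  have h2 : kapp ζ n r ≤ kap ζ m r := by
    rw [kapp_le ζ hδ]
    exact lt_of_le_of_lt (kap_self ζ hδ) hFmn
  omega

include hδ hgen in
lemma th0_surj : Function.Surjective (th0 ζ) := by
  intro t
  have hL : 0 < (L : ℤ) := by exact_mod_cast Nat.pos_of_ne_zero (NeZero.ne L)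
  set k : ℕ := (th0 ζ 0 - t).toNat with hk
  have hbase : th0 ζ ((0 : ℤ) + (-(k : ℤ)) * L) = th0 ζ 0 - (k : ℤ) * L :=
    by rw [th0_shift_mul ζ hδ]; ring
  set base : ℤ := (0 : ℤ) + (-(k : ℤ)) * L with hbdef
  have hb_le : th0 ζ base ≤ t := by
    rw [hbase]
    have h1 : th0 ζ 0 - t ≤ (k : ℤ) := Int.self_le_toNat _
    have h2 : (k : ℤ) ≤ (k : ℤ) * L := le_mul_of_one_le_right (by positivity) hL
    omega
  have reach : ∀ j : ℕ, ∃ m, th0 ζ m = th0 ζ base + j := by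
    intro j
    induction j with
    | zero => exact ⟨base, by simp⟩
    | succ j ih =>
        obtain ⟨m, hm⟩ := ih
        obtain ⟨m', hm'⟩ := th0_succ ζ hgen hδ m
        exact ⟨m', by rw [hm', hm]; push_cast; ring⟩
  obtain ⟨m, hm⟩ := reach (t - th0 ζ base).toNat
  refine ⟨m, ?_⟩
  rw [hm, Int.toNat_of_nonneg (by omega)]
  ring

include hδ hgen in
lemma th0_inj : Function.Injective (th0 ζ) := by
  intro n n' h
  by_contra hne
  rcases lt_or_gt_of_ne (fun e => hne (F_inj ζ hgen e) : F L ζ n ≠ F L ζ n') with h1 | h1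
  · have := th0_lt ζ hδ h1
    omega
  · have := th0_lt ζ hδ h1
    omega

lemma sum_g (g : ℕ → ZMod L)
    (hg : ∀ r ∈ Finset.range L, ∀ r' ∈ Finset.range L, g r = g r' → r = r') :
    ∑ r ∈ Finset.range L, g r = ∑ x : ZMod L, x := by
  have hinj : Set.InjOn g (Finset.range L) := fun a ha b hb hab => hg a ha b hb hab
  have him : (Finset.range L).image g = Finset.univ := by
    apply Finset.eq_of_subset_of_card_le (Finset.subset_univ _)
    rw [Finset.card_image_of_injOn hinj, Finset.card_range, Finset.card_univ, ZMod.card]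
  rw [← him, Finset.sum_image hg]

include hδ hgen in
lemma sum_dvd :
    (L : ℤ) ∣ ((∑ r ∈ Finset.range L, th0 ζ (r : ℤ)) - ∑ r ∈ Finset.range L, (r : ℤ)) := by
  have e1 : ∑ r ∈ Finset.range L, ((th0 ζ (r : ℤ) : ZMod L)) = ∑ x : ZMod L, x := by
    apply sum_g
    intro r hr r' hr' hgg
    obtain ⟨e, he⟩ := Int.ModEq.dvd ((ZMod.intCast_eq_intCast_iff _ _ _).mp hgg)
    have h2 : th0 ζ (r' : ℤ) = th0 ζ ((r : ℤ) + e * L) := by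
      rw [th0_shift_mul ζ hδ]
      linarith [he, mul_comm (L : ℤ) e]
    have h3 : (r' : ℤ) = (r : ℤ) + e * L := th0_inj ζ hgen hδ h2
    exact (rep_unique hr' hr (by linarith [h3] : (r' : ℤ) + 0 * L = (r : ℤ) + e * L)).symm
  have e2 : ∑ r ∈ Finset.range L, ((r : ZMod L)) = ∑ x : ZMod L, x := by
    apply sum_g
    intro r hr r' hr' hgg
    have h1 := (ZMod.natCast_eq_natCast_iff _ _ _).mp hgg
    simp only [Nat.ModEq] at h1
    rwa [Nat.mod_eq_of_lt (Finset.mem_range.mp hr),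
      Nat.mod_eq_of_lt (Finset.mem_range.mp hr')] at h1
  apply (ZMod.intCast_zmod_eq_zero_iff_dvd _ L).mp
  push_cast
  rw [e1, e2]
  ring

include hgen in
lemma rev {θ : ℤ → ℤ} (hinj : Function.Injective θ)
    (hp : ∀ n n' : ℤ, n < n' →
      ((∑ i : ZMod L, ζ i * (aroot L n n' i : ℝ)) < 0 ↔ θ n < θ n'))
    {n n' : ℤ} (h : n ≠ n') : θ n < θ n' ↔ F L ζ n' < F L ζ n := by
  have key : ∀ a b : ℤ, a < b → (θ a < θ b ↔ F L ζ b < F L ζ a) := by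
    intro a b hab
    rw [← hp a b hab]
    have := Fsub ζ hab.le
    constructor <;> intro <;> linarith
  rcases lt_or_gt_of_ne h with hlt | hlt
  · exact key n n' hlt
  · have h2 := key n' n hlt
    have hF : F L ζ n ≠ F L ζ n' := fun e => h (F_inj ζ hgen e)
    have hth : θ n ≠ θ n' := fun e => h (hinj e)
    constructor
    · intro hh
      rcases lt_or_gt_of_ne hF with h3 | h3
      · exact absurd (h2.mpr h3) (by omega)
      · exact h3
    · intro hh
      have : ¬ θ n' < θ n := fun hc => absurd (h2.mp hc) (by linarith)
      omega

end
end S16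


/-- Fix a generic stability parameter `ζ ∈ ℝ^I` with `ζ·δ < 0`.  Then there is
a unique `θ ∈ Θ` such that for all half-integers `h < h'`,
`α_{[h,h']}·ζ < 0 ⟺ θ(h) < θ(h')`: the chambers of the affine `A_{L−1}`
arrangement in the half-space `{ζ : ζ·δ < 0}` are in bijection with `Θ`. -/
theorem stmt16 (L : ℕ) [NeZero L] (ζ : ZMod L → ℝ)
    (hgen : ∀ n n' : ℤ, n < n' → (∑ i : ZMod L, ζ i * (aroot L n n' i : ℝ)) ≠ 0)
    (hδ : (∑ i : ZMod L, ζ i) < 0) :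
    ∃! θ : ℤ → ℤ, IsTheta L θ ∧
      ∀ n n' : ℤ, n < n' →
        ((∑ i : ZMod L, ζ i * (aroot L n n' i : ℝ)) < 0 ↔ θ n < θ n') := by
  classical
  obtain ⟨d, hd⟩ := S16.sum_dvd ζ hgen hδ
  set θ : ℤ → ℤ := fun n => S16.th0 ζ n - d with hθ
  have hLpos : 0 < (L : ℤ) := by exact_mod_cast Nat.pos_of_ne_zero (NeZero.ne L)
  have hbij : Function.Bijective θ := by
    constructor
    · intro a b hab
      simp only [hθ] at hab
      exact S16.th0_inj ζ hgen hδ (by omega : S16.th0 ζ a = S16.th0 ζ b)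
    · intro t
      obtain ⟨m, hm⟩ := S16.th0_surj ζ hgen hδ (t + d)
      exact ⟨m, by simp only [hθ]; omega⟩
  have hshift : ∀ n : ℤ, θ (n + L) = θ n + L := by
    intro n
    have := S16.th0_shift ζ hδ n
    simp only [hθ]
    omega
  have hsum : (∑ n ∈ Finset.range L, θ (n : ℤ)) = ∑ n ∈ Finset.range L, (n : ℤ) := by
    simp only [hθ, Finset.sum_sub_distrib, Finset.sum_const, Finset.card_range,
      nsmul_eq_mul]
    linarith [hd]
  have hprop : ∀ n n' : ℤ, n < n' →
      ((∑ i : ZMod L, ζ i * (aroot L n n' i : ℝ)) < 0 ↔ θ n < θ n') := by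
    intro n n' hnn
    have hF := S16.Fsub ζ hnn.le
    have hiff := S16.th0_iff ζ hgen hδ (ne_of_lt hnn)
    simp only [hθ]
    constructor
    · intro hs
      have h2 : S16.th0 ζ n < S16.th0 ζ n' := hiff.mpr (by linarith)
      omega
    · intro hs
      have h2 : S16.F L ζ n' < S16.F L ζ n := hiff.mp (by omega)
      linarith
  refine ⟨θ, ⟨⟨hbij, hshift, hsum⟩, hprop⟩, ?_⟩
  rintro θ' ⟨⟨hbij', hshift', hsum'⟩, hprop'⟩
  -- θ' = θ + const, then const = 0
  set e : ℤ ≃ ℤ := Equiv.ofBijective θ hbij with he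
  set ψ : ℤ → ℤ := fun t => θ' (e.symm t) with hψ
  have hmono : StrictMono ψ := by
    intro t t' htt
    have h1 : θ (e.symm t) < θ (e.symm t') := by
      have e1 : θ (e.symm t) = t := e.apply_symm_apply t
      have e2 : θ (e.symm t') = t' := e.apply_symm_apply t'
      omega
    have hne : e.symm t ≠ e.symm t' := fun hc => by rw [hc] at h1; omega
    exact (S16.rev ζ hgen hbij'.injective hprop' hne).mpr
      ((S16.rev ζ hgen hbij.injective hprop hne).mp h1)
  have hsurj : Function.Surjective ψ := hbij'.surjective.comp e.symm.surjective
  have hstep : ∀ t : ℤ, ψ (t + 1) = ψ t + 1 := by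
    intro t
    have h1 : ψ t < ψ (t + 1) := hmono (by omega)
    by_contra hc
    have h2 : ψ t + 1 < ψ (t + 1) := by omega
    obtain ⟨s, hs⟩ := hsurj (ψ t + 1)
    rcases le_or_gt s t with h3 | h3
    · have := hmono.le_iff_le.mpr h3
      omega
    · have : t + 1 ≤ s := by omega
      have := hmono.le_iff_le.mpr this
      omega
  have hlin : ∀ t : ℤ, ψ t = t + ψ 0 := by
    intro t
    induction t using Int.induction_on with
    | zero => omega
    | succ k ih => rw [hstep]; omega
    | pred k ih =>
        have := hstep (-(k : ℤ) - 1)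
        simp only [sub_add_cancel] at this
        omega
  have hθ' : ∀ n : ℤ, θ' n = θ n + ψ 0 := by
    intro n
    have h1 : ψ (θ n) = θ n + ψ 0 := hlin (θ n)
    have h2 : e.symm (e n) = n := e.symm_apply_apply n
    have h3 : ψ (θ n) = θ' n := congrArg θ' h2
    omega
  have hzero : ψ 0 = 0 := by
    have h1 : (∑ n ∈ Finset.range L, θ' (n : ℤ))
        = (∑ n ∈ Finset.range L, θ (n : ℤ)) + L * ψ 0 := by
      have hcong : ∑ n ∈ Finset.range L, θ' (n : ℤ)
          = ∑ n ∈ Finset.range L, (θ (n : ℤ) + ψ 0) :=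
        Finset.sum_congr rfl (fun n _ => hθ' (n : ℤ))
      rw [hcong, Finset.sum_add_distrib, Finset.sum_const, Finset.card_range,
        nsmul_eq_mul]
    rw [hsum, hsum'] at h1
    have h2 : (L : ℤ) * ψ 0 = 0 := by linarith
    exact (mul_eq_zero.mp h2).resolve_left (Int.natCast_ne_zero.mpr (NeZero.ne L))
  funext n
  rw [hθ' n, hzero, add_zero]
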